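/- arXiv:1511.03568 — 3 statements merged into one kernel-verified Lean document; each statement's English description precedes it below -/
import Mathlib

section
/- Let G be a strongly connected Eulerian digraph. A chip-distribution x on G is non-terminating if and only if there exists a turnback arc set T of G and a chip-distribution a ≥ 0 such that x ∼ ρ + a, where ρ is the indegree vector of the digraph (V, T). -/
open Finset

variable {V : Type} [Fintype V] [DecidableEq V]

/-- The outdegree of a vertex `v` in the multidigraph with multiplicity function `m`
(`m u v` is the number of directed edges from `u` to `v`). -/
def outdeg (m : V → V → ℕ) (v : V) : ℤ := ∑ u, (m v u : ℤ)

/-- The indegree of a vertex. -/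
def indeg (m : V → V → ℕ) (v : V) : ℤ := ∑ u, (m u v : ℤ)

/-- The digraph is loopless. -/
def Loopless (m : V → V → ℕ) : Prop := ∀ v, m v v = 0

/-- The digraph is strongly connected: every vertex reaches every vertex on a directed path. -/
def StronglyConnected (m : V → V → ℕ) : Prop :=
  ∀ u v : V, Relation.ReflTransGen (fun a b => 0 < m a b) u v

/-- Firing vertex `v` in chip-distribution `x`: `v` sends a chip along each outgoing edge. -/
def fire (m : V → V → ℕ) (x : V → ℤ) (v : V) : V → ℤ :=
  fun u => x u + (m v u : ℤ) - (if u = v then outdeg m v else 0)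

/-- The degree (total number of chips) of a chip-distribution / divisor. -/
def degSum (x : V → ℤ) : ℤ := ∑ v, x v

/-- The state of the chip-firing game after `n` steps, starting from `x` and
firing the vertices `s 0, s 1, …` in this order. -/
def gameState (m : V → V → ℕ) (x : V → ℤ) (s : ℕ → V) : ℕ → (V → ℤ)
  | 0 => x
  | n + 1 => fire m (gameState m x s n) (s n)

/-- `s` encodes an infinite legal chip-firing game starting from `x`:
at each step the fired vertex is active. -/
def InfGame (m : V → V → ℕ) (x : V → ℤ) (s : ℕ → V) : Prop :=
  ∀ n, outdeg m (s n) ≤ gameState m x s n (s n)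

/-- A chip-distribution is terminating if no infinite legal game starts from it. -/
def Terminating (m : V → V → ℕ) (x : V → ℤ) : Prop :=
  ¬ ∃ s : ℕ → V, InfGame m x s

/-- The Laplacian of the digraph applied to `z`. -/
def lap (m : V → V → ℕ) (z : V → ℤ) : V → ℤ :=
  fun u => (∑ v, (m v u : ℤ) * z v) - outdeg m u * z u

/-- Linear equivalence: `x ∼ y` iff `x = y + L z` for some integer vector `z`. -/
def LinEquiv (m : V → V → ℕ) (x y : V → ℤ) : Prop :=
  ∃ z : V → ℤ, x = y + lap m z

/-- A multidigraph (given by its multiplicity function) is acyclic if it has no directed cycle,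
i.e. no vertex can reach itself by a directed walk of positive length. -/
def AcyclicMul (k : V → V → ℕ) : Prop :=
  ∀ v : V, ¬ Relation.TransGen (fun a b => 0 < k a b) v v

set_option linter.unusedSectionVars false
set_option linter.unusedVariables false

/-- Auxiliary: the number of times each vertex has been fired in the first `n` steps. -/
def cnt (s : ℕ → V) : ℕ → V → ℤ
  | 0 => fun _ => 0
  | n + 1 => fun v => cnt s n v + (if v = s n then 1 else 0)

lemma lap_add' (m : V → V → ℕ) (z w : V → ℤ) (u : V) :
    lap m (fun v => z v + w v) u = lap m z u + lap m w u := by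
  simp only [lap, mul_add, Finset.sum_add_distrib]
  ring

lemma lap_neg' (m : V → V → ℕ) (z : V → ℤ) (u : V) :
    lap m (fun v => -(z v)) u = -(lap m z u) := by
  simp only [lap, mul_neg, Finset.sum_neg_distrib]
  ring

lemma lap_single (m : V → V → ℕ) (v u : V) :
    lap m (fun w => if w = v then (1:ℤ) else 0) u
      = (m v u : ℤ) - (if u = v then outdeg m v else 0) := by
  simp only [lap, mul_ite, mul_one, mul_zero, Finset.sum_ite_eq', Finset.mem_univ, if_true]
  by_cases h : u = v <;> simp [h]

lemma gameState_succ (m : V → V → ℕ) (x : V → ℤ) (s : ℕ → V) (n : ℕ) (u : V) :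
    gameState m x s (n+1) u
      = gameState m x s n u + (m (s n) u : ℤ) - (if u = s n then outdeg m (s n) else 0) := rfl

lemma gameState_cnt (m : V → V → ℕ) (x : V → ℤ) (s : ℕ → V) :
    ∀ n u, gameState m x s n u = x u + lap m (cnt s n) u := by
  intro n
  induction n with
  | zero => intro u; simp [gameState, cnt, lap, outdeg]
  | succ n ih =>
    intro u
    rw [gameState_succ, ih u]
    have h1 : lap m (cnt s (n+1)) u
        = lap m (cnt s n) u + lap m (fun w => if w = s n then (1:ℤ) else 0) u := by
      rw [← lap_add']; rfl
    rw [h1, lap_single]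
    ring

/-- Key lemma for the backward direction: at any state of the form `ρ_T + a + L c`,
some vertex is legal to fire. -/
lemma exists_legal [Nonempty V] (m T : V → V → ℕ)
    (hT : ∀ u v, T u v ≤ m u v)
    (hacyc : AcyclicMul (fun u v => m u v - T u v + T v u))
    (heul : ∀ v, outdeg m v = indeg m v)
    (a : V → ℤ) (ha : 0 ≤ a) (c : V → ℤ) :
    ∃ v, outdeg m v ≤ ((∑ u, (T u v : ℤ)) + a v) + lap m c v := by
  set r : V → V → Prop := fun u v => 0 < m u v - T u v + T v u with hr
  haveI : IsTrans V (Relation.TransGen r) := ⟨fun _ _ _ h1 h2 => h1.trans h2⟩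
  haveI : IsIrrefl V (Relation.TransGen r) := ⟨hacyc⟩
  have hwf : WellFounded (Relation.TransGen r) :=
    Finite.wellFounded_of_trans_of_irrefl _
  obtain ⟨v₀, -, hv₀⟩ :=
    Finset.exists_min_image (univ : Finset V) c ⟨Classical.arbitrary V, mem_univ _⟩
  set S : Set V := {v | ∀ u, c v ≤ c u} with hS
  have hSne : S.Nonempty := ⟨v₀, fun u => hv₀ u (mem_univ _)⟩
  obtain ⟨v, hvS, hvmin⟩ := hwf.has_min S hSne
  refine ⟨v, ?_⟩
  have key : ∀ u, (m u v : ℤ) - (T u v : ℤ) ≤ (m u v : ℤ) * (c u - c v) := by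
    intro u
    by_cases hu : u ∈ S
    · have h1 : c u = c v := le_antisymm (hu v) (hvS u)
      have h2 : ¬ r u v := fun h => hvmin u hu (Relation.TransGen.single h)
      have h3 : m u v - T u v + T v u = 0 := Nat.eq_zero_of_not_pos h2
      have h4 : m u v ≤ T u v := Nat.sub_eq_zero_iff_le.mp (Nat.eq_zero_of_add_eq_zero_right h3)
      have h5 : (m u v : ℤ) ≤ (T u v : ℤ) := Int.ofNat_le.mpr h4
      rw [h1]
      simpa using h5
    · have h1 : c v < c u := by
        rcases lt_or_eq_of_le (hvS u) with h | h
        · exact h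
        · exact absurd (fun w => h ▸ hvS w) hu
      have h2 : (1:ℤ) ≤ c u - c v := by omega
      calc (m u v : ℤ) - (T u v : ℤ) ≤ (m u v : ℤ) * 1 := by
              have := Int.ofNat_nonneg (T u v); omega
        _ ≤ (m u v : ℤ) * (c u - c v) :=
              mul_le_mul_of_nonneg_left h2 (Int.ofNat_nonneg _)
  have hlap : lap m c v = ∑ u, (m u v : ℤ) * (c u - c v) := by
    simp only [lap, heul v, indeg, mul_sub, Finset.sum_sub_distrib, Finset.sum_mul]
  have hsum : (∑ u, ((m u v : ℤ) - (T u v : ℤ))) ≤ lap m c v := by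
    rw [hlap]; exact Finset.sum_le_sum (fun u _ => key u)
  have hout : outdeg m v = ∑ u, (m u v : ℤ) := heul v
  rw [hout]
  have hstep : (∑ u, (m u v : ℤ)) - (∑ u, (T u v : ℤ)) ≤ lap m c v := by
    rw [← Finset.sum_sub_distrib]; exact hsum
  have hav := ha v
  simp only [Pi.zero_apply] at hav
  omega

/-- The backward direction: a configuration equivalent to `ρ_T + a` is non-terminating. -/
lemma backward [Nonempty V] (m : V → V → ℕ)
    (heul : ∀ v, outdeg m v = indeg m v) (x : V → ℤ)
    (T : V → V → ℕ) (hT : ∀ u v, T u v ≤ m u v)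
    (hacyc : AcyclicMul (fun u v => m u v - T u v + T v u))
    (a : V → ℤ) (ha : 0 ≤ a) (z : V → ℤ)
    (hx : x = (fun v => (∑ u, (T u v : ℤ)) + a v) + lap m z) :
    ∃ s : ℕ → V, InfGame m x s := by
  set y : V → ℤ := fun v => (∑ u, (T u v : ℤ)) + a v with hy
  have hpick : ∀ c : V → ℤ, ∃ v, outdeg m v ≤ y v + lap m c v :=
    fun c => exists_legal m T hT hacyc heul a ha c
  choose pick hpk using hpick
  let cs : ℕ → V → ℤ :=
    fun n => Nat.rec z (fun _ c => fun v => c v + if v = pick c then 1 else 0) n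
  refine ⟨fun n => pick (cs n), ?_⟩
  have hstate : ∀ n u, gameState m x (fun n => pick (cs n)) n u = y u + lap m (cs n) u := by
    intro n
    induction n with
    | zero =>
      intro u
      have h0 : gameState m x (fun n => pick (cs n)) 0 u = x u := rfl
      rw [h0, hx]; rfl
    | succ n ih =>
      intro u
      rw [gameState_succ, ih u]
      have h1 : lap m (cs (n+1)) u
          = lap m (cs n) u + lap m (fun w => if w = pick (cs n) then (1:ℤ) else 0) u := by
        rw [← lap_add']
      rw [h1, lap_single]
      ring
  intro n
  rw [hstate n]
  exact hpk (cs n)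

/-- The forward direction. -/
lemma forward [Nonempty V] (m : V → V → ℕ) (hloop : Loopless m)
    (hconn : StronglyConnected m)
    (heul : ∀ v, outdeg m v = indeg m v)
    (x : V → ℤ) (s : ℕ → V) (hgame : InfGame m x s) :
    ∃ T : V → V → ℕ, (∀ u v, T u v ≤ m u v) ∧
      AcyclicMul (fun u v => m u v - T u v + T v u) ∧
      ∃ a : V → ℤ, 0 ≤ a ∧ LinEquiv m x (fun v => (∑ u, (T u v : ℤ)) + a v) := by
  -- basic facts about the game
  have hmono : ∀ n u, s n ≠ u → gameState m x s n u ≤ gameState m x s (n+1) u := by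
    intro n u h
    rw [gameState_succ, if_neg (fun h' => h h'.symm)]
    have : (0:ℤ) ≤ (m (s n) u : ℤ) := Int.ofNat_nonneg _
    omega
  have hfire0 : ∀ n, 0 ≤ gameState m x s (n+1) (s n) := by
    intro n
    rw [gameState_succ, if_pos rfl, hloop (s n)]
    have := hgame n
    omega
  have hlb : ∀ n u, min (x u) 0 ≤ gameState m x s n u := by
    intro n
    induction n with
    | zero => intro u; exact min_le_left _ _ |>.trans (le_refl _) |>.trans (le_refl _)
    | succ n ih =>
      intro u
      by_cases h : s n = u
      · subst h
        exact le_trans (min_le_right _ _) (hfire0 n)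
      · exact le_trans (ih u) (hmono n u h)
  have hcons : ∀ n, degSum (gameState m x s n) = degSum x := by
    intro n
    induction n with
    | zero => rfl
    | succ n ih =>
      have h1 : degSum (gameState m x s (n+1))
          = degSum (gameState m x s n) + (∑ u, (m (s n) u : ℤ))
            - (∑ u, if u = s n then outdeg m (s n) else 0) := by
        simp only [degSum, gameState_succ, Finset.sum_sub_distrib, Finset.sum_add_distrib]
      rw [h1, Finset.sum_ite_eq' univ (s n) (fun _ => outdeg m (s n))]
      simp only [mem_univ, if_true]
      have : (∑ u, (m (s n) u : ℤ)) = outdeg m (s n) := rfl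
      rw [this, ih]
      ring
  set C : ℤ := degSum x - ∑ w, min (x w) 0 with hC
  have hub : ∀ n u, gameState m x s n u ≤ C := by
    intro n u
    have h1 : (∑ w ∈ univ.erase u, gameState m x s n w) + gameState m x s n u = degSum x := by
      rw [Finset.sum_erase_add univ _ (mem_univ u)]
      exact hcons n
    have h2 : (∑ w ∈ univ.erase u, min (x w) 0) ≤ ∑ w ∈ univ.erase u, gameState m x s n w :=
      Finset.sum_le_sum (fun w _ => hlb n w)
    have h3 : (∑ w ∈ univ.erase u, min (x w) 0) + min (x u) 0 = ∑ w, min (x w) 0 :=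
      Finset.sum_erase_add univ _ (mem_univ u)
    have h4 : min (x u) 0 ≤ 0 := min_le_right _ _
    omega
  -- every vertex fires beyond every time bound
  have hInf : ∀ v N, ∃ n, N ≤ n ∧ s n = v := by
    by_contra hcon
    push_neg at hcon
    obtain ⟨v₀, N₀, h₀⟩ := hcon
    set P : V → Prop := fun u => ∀ N, ∃ n, N ≤ n ∧ s n = u with hP
    have hsome : ∃ u, P u := by
      by_contra h
      push_neg at h
      simp only [hP] at h
      push_neg at h
      choose N hN using h
      exact hN (s (univ.sup N)) (univ.sup N) (Finset.le_sup (mem_univ _)) rfl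
    obtain ⟨u₀, hu₀⟩ := hsome
    have hv₀ : ¬ P v₀ := by
      intro hp
      obtain ⟨n, hn1, hn2⟩ := hp N₀
      exact h₀ n hn1 hn2
    have hcross : ∀ p q : V, Relation.ReflTransGen (fun a b => 0 < m a b) p q →
        P p → ¬ P q → ∃ u v, P u ∧ ¬ P v ∧ 0 < m u v := by
      intro p q h
      induction h with
      | refl => exact fun hp hq => absurd hp hq
      | @tail b c hab hbc ih =>
        intro hp hq
        by_cases hb : P b
        · exact ⟨b, c, hb, hq, hbc⟩
        · exact ih hp hb
    obtain ⟨u, v, hu, hv, hm⟩ := hcross u₀ v₀ (hconn u₀ v₀) hu₀ hv₀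
    have huv : u ≠ v := fun h => hv (h ▸ hu)
    simp only [hP] at hv
    push_neg at hv
    obtain ⟨N, hN⟩ := hv
    have hmono2 : ∀ p q, N ≤ p → p ≤ q → gameState m x s p v ≤ gameState m x s q v := by
      intro p q hNp hpq
      induction q, hpq using Nat.le_induction with
      | base => exact le_refl _
      | succ q hq ih =>
        refine le_trans ih (hmono q v ?_)
        exact hN q (le_trans hNp hq)
    have hgrow : ∀ k : ℕ, ∃ n, N ≤ n ∧ gameState m x s N v + k ≤ gameState m x s n v := by
      intro k
      induction k with
      | zero => exact ⟨N, le_refl _, by simp⟩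
      | succ k ih =>
        obtain ⟨n, hn1, hn2⟩ := ih
        obtain ⟨n', hn'1, hn'2⟩ := hu n
        have h5 : gameState m x s n v ≤ gameState m x s n' v := hmono2 n n' hn1 hn'1
        have h6 : gameState m x s (n'+1) v
            = gameState m x s n' v + (m (s n') v : ℤ) := by
          rw [gameState_succ, if_neg (fun h' => huv ((h'.trans hn'2).symm))]
          ring
        have h7 : (1:ℤ) ≤ (m (s n') v : ℤ) := by
          rw [hn'2]; exact_mod_cast hm
        refine ⟨n'+1, le_trans hn1 (le_trans hn'1 (Nat.le_succ _)), ?_⟩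
        push_cast
        omega
    obtain ⟨n, hn1, hn2⟩ := hgrow (C + 1 - gameState m x s N v).toNat
    have h8 := hub n v
    have h9 : (C + 1 - gameState m x s N v) ≤ ((C + 1 - gameState m x s N v).toNat : ℤ) :=
      Int.self_le_toNat _
    omega
  -- the time by which every vertex has fired
  choose g hg using (fun v => hInf v 0)
  set t : ℕ := univ.sup g + 1 with ht
  have hgt : ∀ v, g v < t := fun v => Nat.lt_succ_of_le (Finset.le_sup (mem_univ v))
  -- the last firing time of each vertex before t
  have hFne : ∀ v, ((Finset.range t).filter (fun i => s i = v)).Nonempty := by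
    intro v
    exact ⟨g v, by simp [Finset.mem_filter, Finset.mem_range, hgt v, (hg v).2]⟩
  set ℓ : V → ℕ := fun v => ((Finset.range t).filter (fun i => s i = v)).max' (hFne v) with hℓ
  have hℓmem : ∀ v, ℓ v ∈ (Finset.range t).filter (fun i => s i = v) :=
    fun v => Finset.max'_mem _ _
  have hℓs : ∀ v, s (ℓ v) = v := by
    intro v; have := hℓmem v; rw [Finset.mem_filter] at this; exact this.2
  have hℓt : ∀ v, ℓ v < t := by
    intro v; have := hℓmem v; rw [Finset.mem_filter, Finset.mem_range] at this; exact this.1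
  have hℓle : ∀ v i, i < t → s i = v → i ≤ ℓ v := by
    intro v i h1 h2
    exact Finset.le_max' _ i (by rw [Finset.mem_filter, Finset.mem_range]; exact ⟨h1, h2⟩)
  have hℓinj : ∀ u v, ℓ u = ℓ v → u = v := by
    intro u v h
    rw [← hℓs u, ← hℓs v, h]
  -- the turnback arc set
  set T : V → V → ℕ := fun u v => if ℓ v < ℓ u then m u v else 0 with hTdef
  have hT : ∀ u v, T u v ≤ m u v := by
    intro u v
    simp only [hTdef]
    split <;> omega
  have hk : ∀ u v, 0 < m u v - T u v + T v u → ℓ u < ℓ v := by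
    intro u v h
    rcases lt_trichotomy (ℓ u) (ℓ v) with h1 | h1 | h1
    · exact h1
    · exfalso
      have huv : u = v := hℓinj u v h1
      subst huv
      simp only [hTdef, lt_irrefl, if_neg (lt_irrefl (ℓ u))] at h
      have hl := hloop u
      omega
    · exfalso
      have e1 : T u v = m u v := by simp only [hTdef, if_pos h1]
      have e2 : T v u = 0 := by simp only [hTdef, if_neg (not_lt.mpr (le_of_lt h1))]
      rw [e1, e2] at h
      omega
  have hacyc : AcyclicMul (fun u v => m u v - T u v + T v u) := by
    intro v hcyc
    have htrans : ∀ p q : V, Relation.TransGen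
        (fun a b => 0 < m a b - T a b + T b a) p q → ℓ p < ℓ q := by
      intro p q h
      induction h with
      | single h => exact hk _ _ h
      | tail _ h ih => exact lt_trans ih (hk _ _ h)
    exact lt_irrefl _ (htrans v v hcyc)
  -- the increment lemma
  have incr : ∀ (v : V) (p q : ℕ), p ≤ q → (∀ i, p ≤ i → i < q → s i ≠ v) →
      gameState m x s q v = gameState m x s p v + ∑ i ∈ Finset.Ico p q, (m (s i) v : ℤ) := by
    intro v p q hpq
    induction q, hpq using Nat.le_induction with
    | base => intro _; simp
    | succ q hq ih =>
      intro h
      have h1 : s q ≠ v := h q hq (Nat.lt_succ_self q)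
      have h2 := ih (fun i h3 h4 => h i h3 (by omega))
      have h5 : gameState m x s (q+1) v = gameState m x s q v + (m (s q) v : ℤ) := by
        rw [gameState_succ, if_neg (fun h' => h1 h'.symm)]
        ring
      rw [h5, h2, Finset.sum_Ico_succ_top hq]
      ring
  -- the key inequality
  have hkey : ∀ v, (∑ u, (T u v : ℤ)) ≤ gameState m x s t v := by
    intro v
    have h0 : (0:ℤ) ≤ gameState m x s (ℓ v + 1) v := by
      have := hfire0 (ℓ v)
      rwa [hℓs v] at this
    have hnof : ∀ i, ℓ v + 1 ≤ i → i < t → s i ≠ v := by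
      intro i h1 h2 h3
      have := hℓle v i h2 h3
      omega
    have heq := incr v (ℓ v + 1) t (hℓt v) hnof
    set Sv : Finset V := univ.filter (fun u => ℓ v < ℓ u) with hSv
    have himg : ∑ i ∈ Sv.image ℓ, (m (s i) v : ℤ) = ∑ u ∈ Sv, (m u v : ℤ) := by
      rw [Finset.sum_image (fun a _ b _ h => hℓinj a b h)]
      exact Finset.sum_congr rfl (fun u _ => by rw [hℓs u])
    have hsub : Sv.image ℓ ⊆ Finset.Ico (ℓ v + 1) t := by
      intro i hi
      rw [Finset.mem_image] at hi
      obtain ⟨u, hu, rfl⟩ := hi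
      rw [hSv, Finset.mem_filter] at hu
      rw [Finset.mem_Ico]
      exact ⟨hu.2, hℓt u⟩
    have hle1 : ∑ i ∈ Sv.image ℓ, (m (s i) v : ℤ) ≤ ∑ i ∈ Finset.Ico (ℓ v + 1) t, (m (s i) v : ℤ) :=
      Finset.sum_le_sum_of_subset_of_nonneg hsub (fun i _ _ => Int.ofNat_nonneg _)
    have hTsum : (∑ u, (T u v : ℤ)) = ∑ u ∈ Sv, (m u v : ℤ) := by
      rw [hSv, Finset.sum_filter]
      apply Finset.sum_congr rfl
      intro u _
      simp only [hTdef]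
      split <;> simp
    rw [hTsum, ← himg]
    omega
  -- assemble
  refine ⟨T, hT, hacyc, fun v => gameState m x s t v - ∑ u, (T u v : ℤ), ?_, ?_⟩
  · intro v
    simp only [Pi.zero_apply]
    have := hkey v
    omega
  · refine ⟨fun v => -(cnt s t v), ?_⟩
    funext u
    have h1 := gameState_cnt m x s t u
    have h2 := lap_neg' m (cnt s t) u
    simp only [Pi.add_apply]
    rw [h2]
    omega

/-- On a strongly connected Eulerian digraph, a chip-distribution `x` is non-terminating
iff `x ∼ ρ + a` for the indegree vector `ρ` of some turnback arc set and some `a ≥ 0`. -/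
theorem nonterminating_iff_turnback
    {V : Type} [Fintype V] [DecidableEq V] [Nonempty V]
    (m : V → V → ℕ) (hloop : Loopless m) (hconn : StronglyConnected m)
    (heul : ∀ v, outdeg m v = indeg m v)
    (x : V → ℤ) :
    ¬ Terminating m x ↔
      ∃ T : V → V → ℕ, (∀ u v, T u v ≤ m u v) ∧
        AcyclicMul (fun u v => m u v - T u v + T v u) ∧
        ∃ a : V → ℤ, 0 ≤ a ∧ LinEquiv m x (fun v => (∑ u, (T u v : ℤ)) + a v) := by
  rw [Terminating, not_not]
  constructor
  · rintro ⟨s, hs⟩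
    exact forward m hloop hconn heul x s hs
  · rintro ⟨T, hT, hacyc, a, ha, z, hz⟩
    exact backward m heul x T hT hacyc a ha z hz
end

section
/- Let G be an undirected graph (a finite connected loopless multigraph) and let d be its degree vector. Then for every chip-distribution x on G, dist(x) − dist(d − x) = m(G) − deg(x), where m(G) is the number of undirected edges of G. -/
open Finset

variable {V : Type} [Fintype V] [DecidableEq V]

/-- The distance of `x` from the non-terminating distributions:
the minimum degree of a nonnegative `y` such that `x + y` is non-terminating. -/
noncomputable def chipDist (m : V → V → ℕ) (x : V → ℤ) : ℕ :=
  sInf {n : ℕ | ∃ y : V → ℤ, 0 ≤ y ∧ degSum y = (n : ℤ) ∧ ¬ Terminating m (x + y)}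


section RRAux
set_option linter.unusedSectionVars false

namespace RRAux

def indic (v : V) : V → ℤ := fun u => if u = v then 1 else 0

lemma lap_zero (m : V → V → ℕ) : lap m (0 : V → ℤ) = 0 := by
  funext u; simp [lap]

lemma lap_add (m : V → V → ℕ) (a b : V → ℤ) : lap m (a + b) = lap m a + lap m b := by
  funext u
  simp only [lap, Pi.add_apply, mul_add, Finset.sum_add_distrib]
  ring

lemma lap_sub (m : V → V → ℕ) (a b : V → ℤ) : lap m (a - b) = lap m a - lap m b := by
  funext u
  simp only [lap, Pi.sub_apply, mul_sub, Finset.sum_sub_distrib]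
  ring

lemma lap_indic (m : V → V → ℕ) (v : V) :
    lap m (indic v) = fun u => (m v u : ℤ) - if u = v then outdeg m v else 0 := by
  funext u
  simp only [lap, indic, mul_ite, mul_one, mul_zero, Finset.sum_ite_eq', Finset.mem_univ,
    if_true]
  by_cases h : u = v <;> simp [h]

lemma fire_eq (m : V → V → ℕ) (x : V → ℤ) (v : V) :
    fire m x v = x + lap m (indic v) := by
  funext u
  simp only [fire, lap_indic, Pi.add_apply]
  ring

lemma fire_add_right (m : V → V → ℕ) (x c : V → ℤ) (v : V) :
    fire m (x + c) v = fire m x v + c := by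
  funext u; simp only [fire, Pi.add_apply]; ring

lemma gameState_add (m : V → V → ℕ) (x c : V → ℤ) (s : ℕ → V) :
    ∀ n, gameState m (x + c) s n = gameState m x s n + c := by
  intro n
  induction n with
  | zero => rfl
  | succ n ih => simp [gameState, ih, fire_add_right]

/-- number of times `v` is fired among the first `t` steps -/
def cnt (s : ℕ → V) (t : ℕ) : V → ℤ :=
  fun v => (((Finset.range t).filter (fun i => s i = v)).card : ℤ)

lemma cnt_succ (s : ℕ → V) (t : ℕ) : cnt s (t + 1) = cnt s t + indic (s t) := by
  funext v
  simp only [cnt, Finset.range_add_one, Finset.filter_insert, Pi.add_apply, indic]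
  by_cases h : s t = v
  · rw [if_pos h, Finset.card_insert_of_notMem (by simp), if_pos h.symm]
    push_cast; ring
  · rw [if_neg h, if_neg (fun hh => h hh.symm)]
    simp

lemma gameState_eq_lap (m : V → V → ℕ) (x : V → ℤ) (s : ℕ → V) :
    ∀ t, gameState m x s t = x + lap m (cnt s t) := by
  intro t
  induction t with
  | zero =>
      have : cnt s 0 = 0 := by funext v; simp [cnt]
      simp [gameState, this, lap_zero]
  | succ t ih =>
      show fire m (gameState m x s t) (s t) = _
      rw [ih, fire_eq, cnt_succ, lap_add, add_assoc]

lemma degSum_add (a b : V → ℤ) : degSum (a + b) = degSum a + degSum b := by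
  simp [degSum, Finset.sum_add_distrib]

lemma degSum_lap (m : V → V → ℕ) (z : V → ℤ) : degSum (lap m z) = 0 := by
  simp only [degSum, lap, Finset.sum_sub_distrib]
  rw [Finset.sum_comm]
  simp only [← Finset.sum_mul]
  simp [outdeg]

/-- build an infinite legal game from an invariant closed under one legal firing -/
noncomputable def invSeq (m : V → V → ℕ) (P : (V → ℤ) → Prop)
    (hstep : ∀ w, P w → ∃ v, outdeg m v ≤ w v ∧ P (fire m w v))
    (x : V → ℤ) (hx : P x) : ℕ → {w : V → ℤ // P w}
  | 0 => ⟨x, hx⟩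
  | n + 1 =>
      let p := invSeq m P hstep x hx n
      ⟨fire m p.1 (Classical.choose (hstep p.1 p.2)),
        (Classical.choose_spec (hstep p.1 p.2)).2⟩

lemma not_terminating_of_invariant (m : V → V → ℕ) (P : (V → ℤ) → Prop)
    (hstep : ∀ w, P w → ∃ v, outdeg m v ≤ w v ∧ P (fire m w v))
    (x : V → ℤ) (hx : P x) : ¬ Terminating m x := by
  intro hT
  apply hT
  refine ⟨fun n => Classical.choose (hstep (invSeq m P hstep x hx n).1
      (invSeq m P hstep x hx n).2), ?_⟩
  have key : ∀ n, gameState m x (fun n => Classical.choose (hstep (invSeq m P hstep x hx n).1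
      (invSeq m P hstep x hx n).2)) n = (invSeq m P hstep x hx n).1 := by
    intro n
    induction n with
    | zero => rfl
    | succ n ih =>
        show fire m _ _ = _
        rw [ih]
        rfl
  intro n
  rw [key n]
  exact (Classical.choose_spec (hstep (invSeq m P hstep x hx n).1
      (invSeq m P hstep x hx n).2)).1

/-- indegree of `v` in the acyclic orientation induced by the ordering `f`
(edges go from `f`-smaller to `f`-larger endpoints) -/
def cOrd (m : V → V → ℕ) (f : V → ℕ) (v : V) : ℤ :=
  ∑ u, if f u < f v then (m u v : ℤ) else 0

lemma outdeg_eq_indeg (m : V → V → ℕ) (hsym : ∀ u v, m u v = m v u) (v : V) :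
    outdeg m v = ∑ u, (m u v : ℤ) := by
  unfold outdeg
  exact Finset.sum_congr rfl fun u _ => by rw [hsym]

lemma cOrd_max (m : V → V → ℕ) (hsym : ∀ u v, m u v = m v u) (hloop : Loopless m)
    (f : V → ℕ) (hf : Function.Injective f) (v : V) (hv : ∀ u, f u ≤ f v) :
    cOrd m f v = outdeg m v := by
  rw [outdeg_eq_indeg m hsym, cOrd]
  apply Finset.sum_congr rfl
  intro u _
  by_cases h : u = v
  · subst h
    simp [hloop u]
  · have h1 : f u < f v := lt_of_le_of_ne (hv u) (fun hh => h (hf hh))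
    simp [h1]

lemma cOrd_le_outdeg (m : V → V → ℕ) (hsym : ∀ u v, m u v = m v u) (f : V → ℕ) (v : V) :
    cOrd m f v ≤ outdeg m v := by
  rw [outdeg_eq_indeg m hsym, cOrd]
  apply Finset.sum_le_sum
  intro u _
  split
  · exact le_rfl
  · positivity

lemma cOrd_shift_self (m : V → V → ℕ) (g : V → ℕ) (v : V) :
    cOrd m (fun u => if u = v then 0 else g u + 1) v = 0 := by
  apply Finset.sum_eq_zero
  intro u _
  simp

lemma cOrd_shift_ne (m : V → V → ℕ) (g : V → ℕ) (v : V) (hmax : ∀ w, g w ≤ g v)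
    {u : V} (hu : u ≠ v) :
    cOrd m (fun w => if w = v then 0 else g w + 1) u = (m v u : ℤ) + cOrd m g u := by
  have h1 : ¬ (g v < g u) := not_lt.mpr (hmax u)
  have key : ∀ w, (if (if w = v then 0 else g w + 1) < (if u = v then 0 else g u + 1)
        then (m w u : ℤ) else 0)
      = (if w = v then (m w u : ℤ) else 0) + (if g w < g u then (m w u : ℤ) else 0) := by
    intro w
    by_cases hw : w = v
    · subst hw
      rw [if_neg hu, if_pos rfl, if_pos (by omega), if_pos rfl, if_neg h1, add_zero]
    · rw [if_neg hu, if_neg hw, if_neg hw, zero_add]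
      congr 1
      simp only [eq_iff_iff]
      omega
  unfold cOrd
  simp only [key, Finset.sum_add_distrib]
  congr 1
  simp [Finset.sum_ite_eq']

lemma nonterm_of_ge_cOrd [Nonempty V] (m : V → V → ℕ) (hsym : ∀ u v, m u v = m v u)
    (hloop : Loopless m) (f : V → ℕ) (hf : Function.Injective f) (y : V → ℤ)
    (hy : ∀ v, cOrd m f v ≤ y v) : ¬ Terminating m y := by
  apply not_terminating_of_invariant m
    (fun w => ∃ g : V → ℕ, Function.Injective g ∧ ∀ v, cOrd m g v ≤ w v)
  · rintro w ⟨g, hg, hw⟩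
    obtain ⟨v, -, hv⟩ := Finset.exists_max_image Finset.univ g
      ⟨Classical.arbitrary V, Finset.mem_univ _⟩
    have hmax : ∀ u, g u ≤ g v := fun u => hv u (Finset.mem_univ u)
    have hcv : cOrd m g v = outdeg m v := cOrd_max m hsym hloop g hg v hmax
    refine ⟨v, by rw [← hcv]; exact hw v, ?_⟩
    refine ⟨fun u => if u = v then 0 else g u + 1, ?_, ?_⟩
    · intro a b hab
      simp only at hab
      by_cases ha : a = v <;> by_cases hb : b = v
      · rw [ha, hb]
      · rw [if_pos ha, if_neg hb] at hab; omega
      · rw [if_neg ha, if_pos hb] at hab; omega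
      · rw [if_neg ha, if_neg hb] at hab
        exact hg (by omega)
    · intro u
      by_cases hu : u = v
      · rw [hu, cOrd_shift_self]
        simp only [fire, if_pos rfl, if_true, ite_true, eq_self_iff_true]
        have hz : (m v v : ℤ) = 0 := by rw [hloop v]; rfl
        have h1 : outdeg m v ≤ w v := hcv ▸ hw v
        linarith
      · rw [cOrd_shift_ne m g v hmax hu]
        simp only [fire, if_neg hu]
        have := hw u
        linarith
  · exact ⟨f, hf, hy⟩

lemma lap_indic_nonneg (m : V → V → ℕ) {u v : V} (huv : u ≠ v) :
    0 ≤ lap m (indic v) u := by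
  rw [lap_indic]
  simp only [if_neg huv, sub_zero]
  positivity

lemma nonterm_add_indic (m : V → V → ℕ) (x : V → ℤ) (v : V)
    (h : ¬ Terminating m x) : ¬ Terminating m (x + lap m (indic v)) := by
  rw [Terminating, not_not] at h ⊢
  obtain ⟨s, hs⟩ := h
  by_cases hv : ∃ n, s n = v
  · have hk : s (Nat.find hv) = v := Nat.find_spec hv
    set k := Nat.find hv with hkdef
    have hklt : ∀ i, i < k → s i ≠ v := fun i hi => Nat.find_min hv hi
    refine ⟨fun n => if n < k then s n else s (n + 1), ?_⟩
    set s' : ℕ → V := fun n => if n < k then s n else s (n + 1) with hs'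
    have hstatek : gameState m x s (k + 1) = gameState m x s k + lap m (indic v) := by
      show fire m (gameState m x s k) (s k) = _
      rw [hk, fire_eq]
    have key : ∀ n, gameState m (x + lap m (indic v)) s' n
        = if n < k then gameState m x s n + lap m (indic v) else gameState m x s (n + 1) := by
      intro n
      induction n with
      | zero =>
          by_cases h0 : 0 < k
          · simp [gameState, h0]
          · have hk0 : k = 0 := by omega
            simp only [gameState, if_neg h0]
            rw [hk0] at hstatek
            simp only [gameState] at hstatek ⊢
            exact hstatek.symm
      | succ n ih =>
          show fire m (gameState m (x + lap m (indic v)) s' n) (s' n) = _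
          rcases lt_trichotomy (n + 1) k with h1 | h1 | h1
          · have hn : n < k := by omega
            rw [ih, if_pos hn, if_pos h1]
            have : s' n = s n := if_pos hn
            rw [this, fire_add_right]
            rfl
          · have hn : n < k := by omega
            have hsn : s' n = s n := if_pos hn
            rw [ih, if_pos hn, if_neg (by omega), hsn, fire_add_right]
            have h2 : gameState m x s (n + 1 + 1) = gameState m x s (n + 1) + lap m (indic v) := by
              rw [h1]; exact hstatek
            rw [h2]
            rfl
          · have hn : ¬ n < k := by omega
            rw [ih, if_neg hn, if_neg (by omega)]
            have : s' n = s (n + 1) := if_neg hn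
            rw [this]
            rfl
    intro n
    rw [key n]
    by_cases hn : n < k
    · have h1 : s' n = s n := if_pos hn
      rw [if_pos hn, h1, Pi.add_apply]
      have h2 := hs n
      have h3 : 0 ≤ lap m (indic v) (s n) := lap_indic_nonneg m (hklt n hn)
      linarith
    · have h1 : s' n = s (n + 1) := if_neg hn
      rw [if_neg hn, h1]
      exact hs (n + 1)
  · push_neg at hv
    refine ⟨s, ?_⟩
    intro n
    rw [gameState_add, Pi.add_apply]
    have h2 := hs n
    have h3 : 0 ≤ lap m (indic v) (s n) := lap_indic_nonneg m (hv n)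
    linarith

lemma lap_const (m : V → V → ℕ) (hsym : ∀ u v, m u v = m v u) (c : ℤ) :
    lap m (fun _ => c) = 0 := by
  funext u
  show (∑ v, (m v u : ℤ) * c) - outdeg m u * c = 0
  rw [← Finset.sum_mul, ← outdeg_eq_indeg m hsym, sub_self]

lemma degSum_indic (v : V) : degSum (indic v) = 1 := by
  simp [degSum, indic, Finset.sum_ite_eq']

lemma nonterm_add_lap_nonneg (m : V → V → ℕ) (x : V → ℤ) :
    ∀ n : ℕ, ∀ w : V → ℤ, (0 ≤ w) → degSum w = (n : ℤ) →
    ¬ Terminating m x → ¬ Terminating m (x + lap m w) := by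
  intro n
  induction n with
  | zero =>
      intro w hw hd hx
      have hw0 : w = 0 := by
        funext v
        have := (Finset.sum_eq_zero_iff_of_nonneg (fun u _ => hw u)).mp hd v (Finset.mem_univ v)
        exact this
      rw [hw0, lap_zero, add_zero]
      exact hx
  | succ n ih =>
      intro w hw hd hx
      obtain ⟨v, hv⟩ : ∃ v, 0 < w v := by
        by_contra hc
        push_neg at hc
        have hw0 : w = 0 := by
          funext v; exact le_antisymm (hc v) (hw v)
        rw [hw0] at hd
        simp [degSum] at hd
        omega
      have hsplit : w = (fun u => w u - indic v u) + indic v := by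
        funext u; simp
      have hw' : (0 : V → ℤ) ≤ fun u => w u - indic v u := by
        intro u
        have h1 := hw u
        simp only [Pi.zero_apply] at h1 ⊢
        simp only [indic]
        by_cases hu : u = v
        · subst hu
          rw [if_pos rfl]
          omega
        · rw [if_neg hu]
          omega
      have hd' : degSum (fun u => w u - indic v u) = (n : ℤ) := by
        have h1 : degSum (fun u => w u - indic v u) + degSum (indic v) = degSum w := by
          unfold degSum
          rw [← Finset.sum_add_distrib]
          exact Finset.sum_congr rfl fun u _ => by ring
        rw [degSum_indic, hd] at h1
        push_cast at h1
        omega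
      rw [hsplit, lap_add, ← add_assoc]
      exact nonterm_add_indic m _ v (ih _ hw' hd' hx)

lemma nonterm_add_lap [Nonempty V] (m : V → V → ℕ) (hsym : ∀ u v, m u v = m v u)
    (x z : V → ℤ) (hx : ¬ Terminating m x) : ¬ Terminating m (x + lap m z) := by
  set B := Finset.univ.inf' Finset.univ_nonempty z with hB
  set w : V → ℤ := fun v => z v - B with hwdef
  have hw : (0 : V → ℤ) ≤ w := by
    intro v
    have : B ≤ z v := Finset.inf'_le z (Finset.mem_univ v)
    simp only [hwdef, Pi.zero_apply]
    omega
  have hlz : lap m z = lap m w := by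
    have hz : z = w + fun _ => B := by funext v; simp [hwdef]
    rw [hz, lap_add, lap_const m hsym, add_zero]
  have hd : degSum w = ((degSum w).toNat : ℤ) := by
    rw [Int.toNat_of_nonneg]
    exact Finset.sum_nonneg fun v _ => hw v
  rw [hlz]
  exact nonterm_add_lap_nonneg m x (degSum w).toNat w hw hd hx

lemma degSum_gameState (m : V → V → ℕ) (x : V → ℤ) (s : ℕ → V) (t : ℕ) :
    degSum (gameState m x s t) = degSum x := by
  rw [gameState_eq_lap, degSum_add, degSum_lap, add_zero]

lemma gameState_lower (m : V → V → ℕ) (x : V → ℤ) (s : ℕ → V) (hs : InfGame m x s) :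
    ∀ t v, min (x v) 0 ≤ gameState m x s t v := by
  intro t
  induction t with
  | zero => intro v; exact min_le_left _ _
  | succ t ih =>
      intro v
      show min (x v) 0 ≤ fire m (gameState m x s t) (s t) v
      unfold fire
      by_cases hv : v = s t
      · rw [if_pos hv]
        have h1 := hs t
        rw [← hv] at h1
        have h2 : (0 : ℤ) ≤ (m (s t) v : ℤ) := by positivity
        have h3 : outdeg m (s t) = outdeg m v := by rw [hv]
        have h4 : min (x v) 0 ≤ 0 := min_le_right _ _
        rw [hv] at h1 ⊢
        omega
      · rw [if_neg hv]
        have h2 : (0 : ℤ) ≤ (m (s t) v : ℤ) := by positivity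
        have := ih v
        omega

lemma exists_repeat [Nonempty V] (m : V → V → ℕ) (x : V → ℤ) (s : ℕ → V)
    (hs : InfGame m x s) :
    ∃ i j, i < j ∧ gameState m x s i = gameState m x s j := by
  set A := ∑ u, min (x u) 0 with hA
  have hAle : ∀ v, A ≤ min (x v) 0 := by
    intro v
    rw [hA, ← Finset.add_sum_erase _ _ (Finset.mem_univ v)]
    have : (∑ u ∈ Finset.univ.erase v, min (x u) 0) ≤ 0 :=
      Finset.sum_nonpos fun u _ => min_le_right _ _
    omega
  set B := degSum x - A with hB
  have hbound : ∀ t v, gameState m x s t v ∈ Set.Icc A B := by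
    intro t v
    constructor
    · exact (hAle v).trans (gameState_lower m x s hs t v)
    · have h1 : gameState m x s t v + ∑ u ∈ Finset.univ.erase v, gameState m x s t u
          = degSum x := by
        rw [← degSum_gameState m x s t, degSum]
        exact Finset.add_sum_erase _ _ (Finset.mem_univ v)
      have h2 : (∑ u ∈ Finset.univ.erase v, min (x u) 0)
          ≤ ∑ u ∈ Finset.univ.erase v, gameState m x s t u :=
        Finset.sum_le_sum fun u _ => gameState_lower m x s hs t u
      have h3 : A = min (x v) 0 + ∑ u ∈ Finset.univ.erase v, min (x u) 0 :=
        (Finset.add_sum_erase _ _ (Finset.mem_univ v)).symm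
      have h4 : min (x v) 0 ≤ 0 := min_le_right _ _
      rw [hB]
      omega
  have hfin : Finite (V → Set.Icc A B) := by
    have : Finite (Set.Icc A B) := Set.finite_Icc A B
    infer_instance
  obtain ⟨i, j, hne, heq⟩ := Finite.exists_ne_map_eq_of_infinite
    (fun t => (fun v => (⟨gameState m x s t v, hbound t v⟩ : Set.Icc A B)))
  have heq' : gameState m x s i = gameState m x s j := by
    funext v
    exact congrArg Subtype.val (congrFun heq v)
  rcases lt_or_gt_of_ne hne with h | h
  · exact ⟨i, j, h, heq'⟩
  · exact ⟨j, i, h, heq'.symm⟩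

lemma lap_kernel_const [Nonempty V] (m : V → V → ℕ) (hsym : ∀ u v, m u v = m v u)
    (hconn : StronglyConnected m) (z : V → ℤ) (hz : lap m z = 0) :
    ∃ K : ℤ, ∀ v, z v = K := by
  obtain ⟨v₀, -, hmax'⟩ := Finset.exists_max_image Finset.univ z
    ⟨Classical.arbitrary V, Finset.mem_univ _⟩
  have hmax : ∀ v, z v ≤ z v₀ := fun v => hmax' v (Finset.mem_univ v)
  refine ⟨z v₀, fun v => ?_⟩
  have step : ∀ b c, z b = z v₀ → 0 < m b c → z c = z v₀ := by
    intro b c hb hbc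
    have h1 := congrFun hz b
    simp only [lap, Pi.zero_apply] at h1
    have h0 : (∑ u, (m u b : ℤ) * (z u - z b)) = 0 := by
      rw [outdeg_eq_indeg m hsym, Finset.sum_mul] at h1
      rw [← Finset.sum_sub_distrib] at h1
      rw [← h1]
      exact Finset.sum_congr rfl fun u _ => by ring
    have hnonpos : ∀ u ∈ Finset.univ, (m u b : ℤ) * (z u - z b) ≤ 0 := by
      intro u _
      apply mul_nonpos_of_nonneg_of_nonpos
      · positivity
      · have := hmax u; omega
    have hterm := (Finset.sum_eq_zero_iff_of_nonpos hnonpos).mp h0 c (Finset.mem_univ c)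
    have hcb : (0 : ℤ) < (m c b : ℤ) := by
      have := hsym b c ▸ hbc
      exact_mod_cast this
    have : z c - z b = 0 := by
      rcases mul_eq_zero.mp hterm with h | h
      · omega
      · exact h
    omega
  have hpath := hconn v₀ v
  induction hpath with
  | refl => rfl
  | tail h1 h2 ih => exact step _ _ ih h2

lemma cnt_split (s : ℕ → V) {i j : ℕ} (hij : i ≤ j) (v : V) :
    cnt s j v = cnt s i v + (((Finset.Ico i j).filter (fun t => s t = v)).card : ℤ) := by
  unfold cnt
  rw [Finset.range_eq_Ico, Finset.range_eq_Ico,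
      ← Finset.Ico_union_Ico_eq_Ico (Nat.zero_le i) hij, Finset.filter_union,
      Finset.card_union_of_disjoint (Finset.disjoint_filter_filter
        (Finset.Ico_disjoint_Ico_consecutive 0 i j))]
  push_cast
  ring

lemma exists_cOrd_of_nonterm [Nonempty V] (m : V → V → ℕ) (hsym : ∀ u v, m u v = m v u)
    (hconn : StronglyConnected m) (x : V → ℤ) (h : ¬ Terminating m x) :
    ∃ f : V → ℕ, Function.Injective f ∧ ∃ z : V → ℤ, ∀ v, cOrd m f v ≤ x v + lap m z v := by
  rw [Terminating, not_not] at h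
  obtain ⟨s, hs⟩ := h
  obtain ⟨i, j, hij, heq⟩ := exists_repeat m x s hs
  have hlap0 : lap m (fun v => cnt s j v - cnt s i v) = 0 := by
    have h1 : x + lap m (cnt s i) = x + lap m (cnt s j) := by
      rw [← gameState_eq_lap, ← gameState_eq_lap, heq]
    have h2 : lap m (cnt s i) = lap m (cnt s j) := add_left_cancel h1
    have h3 : (fun v => cnt s j v - cnt s i v) = cnt s j - cnt s i := rfl
    rw [h3, lap_sub, ← h2, sub_self]
  obtain ⟨K, hK⟩ := lap_kernel_const m hsym hconn _ hlap0
  set occ : V → Finset ℕ := fun v => (Finset.Ico i j).filter (fun t => s t = v) with hocc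
  have hcard : ∀ v, ((occ v).card : ℤ) = K := by
    intro v
    have h1 := cnt_split s hij.le v
    have h2 : cnt s j v - cnt s i v = K := hK v
    simp only [hocc]
    omega
  have hK1 : 1 ≤ K := by
    have h1 : i ∈ occ (s i) := by
      have h0 : i ∈ (Finset.Ico i j).filter (fun t => s t = s i) :=
        Finset.mem_filter.mpr ⟨Finset.mem_Ico.mpr ⟨le_rfl, hij⟩, rfl⟩
      simpa [hocc] using h0
    have h2 := hcard (s i)
    have h3 : 0 < (occ (s i)).card := Finset.card_pos.mpr ⟨i, h1⟩
    omega
  have hocc_ne : ∀ v, (occ v).Nonempty := by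
    intro v
    rw [← Finset.card_pos]
    have := hcard v
    omega
  set T : V → ℕ := fun v => (occ v).max' (hocc_ne v) with hT
  have hTmem : ∀ v, T v ∈ occ v := fun v => (occ v).max'_mem _
  have hTIco : ∀ v, i ≤ T v ∧ T v < j := by
    intro v
    have h1 := hTmem v
    rw [hocc, Finset.mem_filter, Finset.mem_Ico] at h1
    exact h1.1
  have hTs : ∀ v, s (T v) = v := by
    intro v
    have h1 := hTmem v
    rw [hocc, Finset.mem_filter] at h1
    exact h1.2
  have hTle : ∀ v t, t ∈ occ v → t ≤ T v := fun v t ht => Finset.le_max' _ t ht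
  refine ⟨fun v => j - T v, ?_, ?_⟩
  · intro a b hab
    simp only at hab
    have ha := hTIco a
    have hb := hTIco b
    have hTab : T a = T b := by omega
    rw [← hTs a, ← hTs b, hTab]
  · refine ⟨cnt s i, fun v => ?_⟩
    set t := T v with htdef
    have hit : i ≤ t := (hTIco v).1
    have htj : t < j := (hTIco v).2
    set w : V → ℤ := fun u => cnt s t u - cnt s i u with hw
    have hwc : ∀ u, w u = (((Finset.Ico i t).filter (fun a => s a = u)).card : ℤ) := by
      intro u
      have h1 := cnt_split s hit u
      simp only [hw]
      omega
    have hleg : outdeg m v ≤ x v + lap m (cnt s i) v + lap m w v := by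
      have h1 := hs t
      rw [hTs v] at h1
      have hcnt : cnt s t = cnt s i + w := by
        funext u
        rw [hw]
        show cnt s t u = cnt s i u + (cnt s t u - cnt s i u)
        ring
      have hstate : gameState m x s t v = x v + lap m (cnt s i) v + lap m w v := by
        rw [gameState_eq_lap, hcnt, lap_add]
        show x v + (lap m (cnt s i) v + lap m w v) = _
        ring
      rw [hstate] at h1
      exact h1
    have hw_nonneg : ∀ u, 0 ≤ w u := by
      intro u
      rw [hwc u]
      positivity
    have hw_le : ∀ u, w u ≤ K := by
      intro u
      rw [hwc u, ← hcard u, hocc]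
      have hsub : (Finset.Ico i t).filter (fun a => s a = u)
          ⊆ (Finset.Ico i j).filter (fun a => s a = u) :=
        Finset.filter_subset_filter _ (Finset.Ico_subset_Ico le_rfl htj.le)
      exact_mod_cast Finset.card_le_card hsub
    have hw_v : w v = K - 1 := by
      have hkey : (Finset.Ico i t).filter (fun a => s a = v) = (occ v).erase t := by
        ext a
        simp only [hocc, Finset.mem_filter, Finset.mem_Ico, Finset.mem_erase]
        constructor
        · rintro ⟨⟨h1, h2⟩, h3⟩
          exact ⟨by omega, ⟨h1, by omega⟩, h3⟩
        · rintro ⟨h1, ⟨h2, h3⟩, h4⟩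
          have ha : a ∈ occ v := by
            simp only [hocc, Finset.mem_filter, Finset.mem_Ico]
            exact ⟨⟨h2, h3⟩, h4⟩
          have := hTle v a ha
          exact ⟨⟨h2, by omega⟩, h4⟩
      have hc1 : ((occ v).erase t).card = (occ v).card - 1 :=
        Finset.card_erase_of_mem (hTmem v)
      have hc2 := hcard v
      have hc3 : 0 < (occ v).card := Finset.card_pos.mpr (hocc_ne v)
      rw [hwc v, hkey]
      push_cast [hc1]
      omega
    have hw_gt : ∀ u, T v < T u → w u ≤ K - 1 := by
      intro u hu
      have hsub : (Finset.Ico i t).filter (fun a => s a = u) ⊆ (occ u).erase (T u) := by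
        intro a ha
        simp only [Finset.mem_filter, Finset.mem_Ico] at ha
        simp only [hocc, Finset.mem_erase, Finset.mem_filter, Finset.mem_Ico]
        refine ⟨by omega, ⟨⟨ha.1.1, by omega⟩, ha.2⟩⟩
      have hc1 : ((occ u).erase (T u)).card = (occ u).card - 1 :=
        Finset.card_erase_of_mem (hTmem u)
      have hc2 := hcard u
      have hc3 : 0 < (occ u).card := Finset.card_pos.mpr (hocc_ne u)
      have hc4 := Finset.card_le_card hsub
      rw [hwc u]
      rw [hc1] at hc4
      omega
    have hcord : cOrd m (fun v => j - T v) v = ∑ u, if T v < T u then (m u v : ℤ) else 0 := by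
      unfold cOrd
      apply Finset.sum_congr rfl
      intro u _
      congr 1
      simp only [eq_iff_iff]
      have h1 := hTIco u
      have h2 := hTIco v
      omega
    have hmain : (∑ u, if T v < T u then (m u v : ℤ) else 0) + (∑ u, (m u v : ℤ) * w u)
        ≤ K * outdeg m v := by
      rw [outdeg_eq_indeg m hsym, Finset.mul_sum, ← Finset.sum_add_distrib]
      apply Finset.sum_le_sum
      intro u _
      have h2 : (0 : ℤ) ≤ (m u v : ℤ) := by positivity
      by_cases hcase : T v < T u
      · rw [if_pos hcase]
        have h1 := hw_gt u hcase
        have h3 : (m u v : ℤ) * (w u + 1) ≤ (m u v : ℤ) * K :=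
          mul_le_mul_of_nonneg_left (by omega) h2
        nlinarith
      · rw [if_neg hcase]
        have h1 := hw_le u
        have h3 : (m u v : ℤ) * w u ≤ (m u v : ℤ) * K :=
          mul_le_mul_of_nonneg_left h1 h2
        linarith
    have h5 : lap m w v = (∑ u, (m u v : ℤ) * w u) - outdeg m v * (K - 1) := by
      rw [← hw_v]
      rfl
    rw [hcord]
    show (∑ u, if T v < T u then (m u v : ℤ) else 0) ≤ x v + lap m (cnt s i) v
    linarith [hmain, hleg, h5]

lemma lap_neg (m : V → V → ℕ) (z : V → ℤ) : lap m (-z) = - lap m z := by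
  have h := lap_sub m 0 z
  rw [zero_sub, lap_zero, zero_sub] at h
  exact h

lemma degSum_sub (a b : V → ℤ) : degSum (a - b) = degSum a - degSum b := by
  simp [degSum, Finset.sum_sub_distrib]

/-- **Main characterization**: a distribution is non-terminating iff, up to linear
equivalence, it dominates the indegree vector of some acyclic orientation. -/
lemma nonterm_iff [Nonempty V] (m : V → V → ℕ) (hsym : ∀ u v, m u v = m v u)
    (hloop : Loopless m) (hconn : StronglyConnected m) (x : V → ℤ) :
    ¬ Terminating m x
      ↔ ∃ f : V → ℕ, Function.Injective f ∧ ∃ z : V → ℤ, ∀ v, cOrd m f v ≤ x v + lap m z v := by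
  constructor
  · exact exists_cOrd_of_nonterm m hsym hconn x
  · rintro ⟨f, hf, z, hz⟩
    have h1 : ¬ Terminating m (x + lap m z) :=
      nonterm_of_ge_cOrd m hsym hloop f hf _ (fun v => hz v)
    have h2 := nonterm_add_lap m hsym (x + lap m z) (-z) h1
    have h3 : (x + lap m z) + lap m (-z) = x := by
      rw [lap_neg]
      funext v
      simp
    rw [h3] at h2
    exact h2

lemma cOrd_add_rev (m : V → V → ℕ) (hsym : ∀ u v, m u v = m v u) (hloop : Loopless m)
    (f : V → ℕ) (hf : Function.Injective f) (v : V) :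
    cOrd m f v + cOrd m (fun u => Finset.univ.sup f - f u) v = outdeg m v := by
  unfold cOrd
  rw [← Finset.sum_add_distrib, outdeg_eq_indeg m hsym]
  apply Finset.sum_congr rfl
  intro u _
  have hu : f u ≤ Finset.univ.sup f := Finset.le_sup (Finset.mem_univ u)
  have hv : f v ≤ Finset.univ.sup f := Finset.le_sup (Finset.mem_univ v)
  show (if f u < f v then (m u v : ℤ) else 0)
      + (if Finset.univ.sup f - f u < Finset.univ.sup f - f v then (m u v : ℤ) else 0)
      = (m u v : ℤ)
  by_cases h : u = v
  · subst h
    simp [hloop u]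
  · have hne : f u ≠ f v := fun hh => h (hf hh)
    rcases lt_or_gt_of_ne hne with hlt | hgt
    · rw [if_pos hlt, if_neg (by omega), add_zero]
    · rw [if_neg (by omega), if_pos (by omega), zero_add]

lemma rev_inj (f : V → ℕ) (hf : Function.Injective f) :
    Function.Injective (fun u => Finset.univ.sup f - f u) := by
  intro a b hab
  simp only at hab
  have ha : f a ≤ Finset.univ.sup f := Finset.le_sup (Finset.mem_univ a)
  have hb : f b ≤ Finset.univ.sup f := Finset.le_sup (Finset.mem_univ b)
  exact hf (by omega)

lemma sum_outdeg (m : V → V → ℕ) (mG : ℕ) (hmG : 2 * mG = ∑ u, ∑ v, m u v) :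
    (∑ v, outdeg m v) = 2 * (mG : ℤ) := by
  unfold outdeg
  have h2 : ((2 * mG : ℕ) : ℤ) = ((∑ u, ∑ v, m u v : ℕ) : ℤ) := by rw [hmG]
  push_cast at h2
  omega

lemma degSum_cOrd (m : V → V → ℕ) (hsym : ∀ u v, m u v = m v u) (hloop : Loopless m)
    (f : V → ℕ) (hf : Function.Injective f) (mG : ℕ) (hmG : 2 * mG = ∑ u, ∑ v, m u v) :
    degSum (cOrd m f) = (mG : ℤ) := by
  have hrev : degSum (cOrd m (fun u => Finset.univ.sup f - f u)) = degSum (cOrd m f) := by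
    unfold degSum cOrd
    have step1 : (∑ v, ∑ u, if (Finset.univ.sup f - f u) < (Finset.univ.sup f - f v)
          then (m u v : ℤ) else 0)
        = ∑ v, ∑ u, if f v < f u then (m u v : ℤ) else 0 := by
      apply Finset.sum_congr rfl
      intro v _
      apply Finset.sum_congr rfl
      intro u _
      congr 1
      simp only [eq_iff_iff]
      have hu : f u ≤ Finset.univ.sup f := Finset.le_sup (Finset.mem_univ u)
      have hv : f v ≤ Finset.univ.sup f := Finset.le_sup (Finset.mem_univ v)
      omega
    rw [step1, Finset.sum_comm]
    apply Finset.sum_congr rfl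
    intro v _
    apply Finset.sum_congr rfl
    intro u _
    rw [hsym]
  have h2 : degSum (cOrd m f) + degSum (cOrd m (fun u => Finset.univ.sup f - f u))
      = ∑ v, outdeg m v := by
    unfold degSum
    rw [← Finset.sum_add_distrib]
    exact Finset.sum_congr rfl fun v _ => cOrd_add_rev m hsym hloop f hf v
  have h3 := sum_outdeg m mG hmG
  rw [hrev] at h2
  omega

lemma distSet_nonempty [Nonempty V] (m : V → V → ℕ) (hsym : ∀ u v, m u v = m v u)
    (hloop : Loopless m) (x : V → ℤ) :
    {n : ℕ | ∃ y : V → ℤ, 0 ≤ y ∧ degSum y = (n : ℤ) ∧ ¬ Terminating m (x + y)}.Nonempty := by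
  set f₀ : V → ℕ := fun v => ((Fintype.equivFin V) v : ℕ) with hf₀def
  have hf₀ : Function.Injective f₀ := by
    intro a b hab
    simp only [hf₀def] at hab
    exact (Fintype.equivFin V).injective (Fin.val_injective hab)
  set y : V → ℤ := fun v => max (outdeg m v - x v) 0 with hy
  have hy0 : (0 : V → ℤ) ≤ y := fun v => le_max_right _ _
  have hnt : ¬ Terminating m (x + y) := by
    apply nonterm_of_ge_cOrd m hsym hloop f₀ hf₀
    intro v
    have h1 : cOrd m f₀ v ≤ outdeg m v := cOrd_le_outdeg m hsym f₀ v
    have h2 : outdeg m v - x v ≤ y v := le_max_left _ _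
    have : (x + y) v = x v + y v := rfl
    rw [this]
    omega
  have hdnn : 0 ≤ degSum y := Finset.sum_nonneg fun v _ => hy0 v
  exact ⟨(degSum y).toNat, y, hy0, by rw [Int.toNat_of_nonneg hdnn], hnt⟩

lemma chipDist_le [Nonempty V] (m : V → V → ℕ) (hsym : ∀ u v, m u v = m v u)
    (hloop : Loopless m) (hconn : StronglyConnected m)
    (mG : ℕ) (hmG : 2 * mG = ∑ u, ∑ v, m u v) (x : V → ℤ) :
    (chipDist m (fun v => outdeg m v - x v) : ℤ) ≤ (chipDist m x : ℤ) + degSum x - mG := by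
  have hmem : chipDist m x ∈ {n : ℕ | ∃ y : V → ℤ, 0 ≤ y ∧ degSum y = (n : ℤ)
      ∧ ¬ Terminating m (x + y)} :=
    Nat.sInf_mem (distSet_nonempty m hsym hloop x)
  obtain ⟨y, hy0, hydeg, hynt⟩ := hmem
  obtain ⟨f, hf, z, hz⟩ := (nonterm_iff m hsym hloop hconn (x + y)).mp hynt
  set F : V → ℤ := fun v => x v + y v + lap m z v - cOrd m f v with hF
  have hF0 : (0 : V → ℤ) ≤ F := by
    intro v
    have h1 := hz v
    have h2 : (x + y) v = x v + y v := rfl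
    rw [h2] at h1
    simp only [hF, Pi.zero_apply]
    omega
  have hnt2 : ¬ Terminating m ((fun v => outdeg m v - x v) + F) := by
    rw [nonterm_iff m hsym hloop hconn]
    refine ⟨fun u => Finset.univ.sup f - f u, rev_inj f hf, -z, ?_⟩
    intro v
    have h1 := cOrd_add_rev m hsym hloop f hf v
    have h2 : ((fun v => outdeg m v - x v) + F) v = outdeg m v - x v + F v := rfl
    rw [h2, lap_neg]
    simp only [hF, Pi.neg_apply]
    have h3 := hy0 v
    simp only [Pi.zero_apply] at h3
    omega
  have hdF : degSum F = degSum x + degSum y - (mG : ℤ) := by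
    have h1 : F = ((x + y) + lap m z) - cOrd m f := by
      funext v
      show x v + y v + lap m z v - cOrd m f v = (x v + y v + lap m z v) - cOrd m f v
      ring
    rw [h1, degSum_sub, degSum_add, degSum_add, degSum_lap,
        degSum_cOrd m hsym hloop f hf mG hmG]
    ring
  have hdF0 : 0 ≤ degSum F := Finset.sum_nonneg fun v _ => hF0 v
  have hmem2 : (degSum F).toNat ∈ {n : ℕ | ∃ y : V → ℤ, 0 ≤ y ∧ degSum y = (n : ℤ)
      ∧ ¬ Terminating m ((fun v => outdeg m v - x v) + y)} :=
    ⟨F, hF0, by rw [Int.toNat_of_nonneg hdF0], hnt2⟩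
  have hle : chipDist m (fun v => outdeg m v - x v) ≤ (degSum F).toNat :=
    Nat.sInf_le hmem2
  have hle2 : (chipDist m (fun v => outdeg m v - x v) : ℤ) ≤ degSum F := by
    rw [← Int.toNat_of_nonneg hdF0]
    exact_mod_cast hle
  rw [hdF] at hle2
  omega

end RRAux

end RRAux

/-- **Riemann–Roch theorem for graphs, chip-firing form**: for an undirected graph with
degree vector `d` and any chip-distribution `x`,
`dist(x) - dist(d - x) = m(G) - deg(x)`. -/
theorem riemann_roch_dist_form
    {V : Type} [Fintype V] [DecidableEq V] [Nonempty V]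
    (m : V → V → ℕ) (hsym : ∀ u v, m u v = m v u)
    (hloop : Loopless m) (hconn : StronglyConnected m)
    (mG : ℕ) (hmG : 2 * mG = ∑ u, ∑ v, m u v)
    (x : V → ℤ) :
    (chipDist m x : ℤ) - (chipDist m (fun v => outdeg m v - x v) : ℤ)
      = (mG : ℤ) - degSum x := by
  have h1 := RRAux.chipDist_le m hsym hloop hconn mG hmG x
  have h2 := RRAux.chipDist_le m hsym hloop hconn mG hmG (fun v => outdeg m v - x v)
  have h3 : (fun v => outdeg m v - (fun v => outdeg m v - x v) v) = x := by
    funext v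
    simp
  rw [h3] at h2
  have h4 : degSum (fun v => outdeg m v - x v) = 2 * (mG : ℤ) - degSum x := by
    unfold degSum
    rw [Finset.sum_sub_distrib, RRAux.sum_outdeg m mG hmG]
  rw [h4] at h2
  omega
end

section
/- Let G be a strongly connected Eulerian digraph, let T be a minimum cardinality turnback arc set of G, and let x be the indegree vector of the digraph (V, T). Then dist(x) = 0 and dist(d⁻ − x) = 0; consequently dist(x) − dist(d⁻ − x) = minfas(G) − deg(x), and for y = d⁻ − x, dist(y) − dist(d⁻ − y) = |E(G)| − minfas(G) − deg(y). -/
open Finset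

variable {V : Type} [Fintype V] [DecidableEq V]

/-- The minimum cardinality of a feedback arc set. -/
noncomputable def minfas (m : V → V → ℕ) : ℕ :=
  sInf {n : ℕ | ∃ F : V → V → ℕ, (∀ u v, F u v ≤ m u v) ∧
    AcyclicMul (fun u v => m u v - F u v) ∧ ∑ u, ∑ v, F u v = n}

section Helpers
variable {V : Type} [Fintype V] [DecidableEq V]

set_option linter.unusedSectionVars false

lemma exists_key (k : V → V → ℕ) (hac : AcyclicMul k) :
    ∃ K : V → ℕ, Function.Injective K ∧ ∀ u v, 0 < k u v → K u < K v := by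
  classical
  set r : V → V → Prop := fun a b => 0 < k a b with hr
  set f : V → ℕ := fun v => {u | Relation.TransGen r u v}.ncard with hf
  have hfmono : ∀ {u v}, r u v → f u < f v := by
    intro u v huv
    have hsub : {w | Relation.TransGen r w u} ⊂ {w | Relation.TransGen r w v} := by
      constructor
      · intro w hw
        exact hw.tail huv
      · intro hc
        exact hac u (hc (Relation.TransGen.single huv))
    exact Set.ncard_lt_ncard hsub (Set.toFinite _)
  set e : V → ℕ := fun v => (Fintype.equivFin V v : ℕ) with he
  have heb : ∀ v, e v < Fintype.card V := fun v => (Fintype.equivFin V v).isLt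
  have heinj : Function.Injective e := by
    intro a b h
    exact (Fintype.equivFin V).injective (Fin.ext h)
  set K : V → ℕ := fun v => f v * Fintype.card V + e v with hK
  have hKlt : ∀ {u v}, f u < f v → K u < K v := by
    intro u v h1
    calc K u < f u * Fintype.card V + Fintype.card V := Nat.add_lt_add_left (heb u) _
      _ = (f u + 1) * Fintype.card V := by ring
      _ ≤ f v * Fintype.card V := Nat.mul_le_mul_right _ h1
      _ ≤ K v := Nat.le_add_right _ _
  refine ⟨K, ?_, fun u v huv => hKlt (hfmono huv)⟩
  intro a b h
  rcases lt_trichotomy (f a) (f b) with h1 | h1 | h1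
  · exact absurd h (Nat.ne_of_lt (hKlt h1))
  · refine heinj ?_
    have h2 : f a * Fintype.card V + e a = f b * Fintype.card V + e b := h
    rw [h1] at h2
    omega
  · exact absurd h.symm (Nat.ne_of_lt (hKlt h1))

lemma nonterm (m : V → V → ℕ) (hloop : Loopless m)
    (heul : ∀ v, outdeg m v = indeg m v) {N : ℕ} (hN : 0 < N) (g : V ≃ Fin N) :
    ¬ Terminating m (fun v => ∑ u, if g v < g u then (m u v : ℤ) else 0) := by
  classical
  set x : V → ℤ := fun v => ∑ u, if g v < g u then (m u v : ℤ) else 0 with hx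
  set s : ℕ → V := fun n => g.symm ⟨n % N, Nat.mod_lt _ hN⟩ with hs
  set X : ℕ → V → ℤ := fun r v =>
    x v + (∑ u, if (g u : ℕ) < r then (m u v : ℤ) else 0)
      - (if (g v : ℕ) < r then outdeg m v else 0) with hX
  have hX0 : X 0 = x := by
    funext v
    simp [hX]
  have hXN : X N = x := by
    funext v
    have h1 : ∀ u : V, (g u : ℕ) < N := fun u => (g u).isLt
    simp only [hX, if_pos (h1 v)]
    have h2 : (∑ u, if (g u : ℕ) < N then (m u v : ℤ) else 0) = indeg m v := by
      rw [indeg]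
      exact Finset.sum_congr rfl fun u _ => if_pos (h1 u)
    rw [h2, ← heul v]
    ring
  have hstep : ∀ r : ℕ, (hr : r < N) → fire m (X r) (g.symm ⟨r, hr⟩) = X (r + 1) := by
    intro r hr
    set w : V := g.symm ⟨r, hr⟩ with hw
    have hgw : (g w : ℕ) = r := by simp [hw]
    have hval : ∀ u : V, ((g u : ℕ) = r) → u = w := by
      intro u h
      exact g.injective (Fin.ext (by rw [hgw, h]))
    funext v
    have hsum : (∑ u, if (g u : ℕ) < r + 1 then (m u v : ℤ) else 0)
        = (∑ u, if (g u : ℕ) < r then (m u v : ℤ) else 0) + (m w v : ℤ) := by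
      have key : ∀ u : V, (if (g u : ℕ) < r + 1 then (m u v : ℤ) else 0)
          = (if (g u : ℕ) < r then (m u v : ℤ) else 0)
            + (if u = w then (m u v : ℤ) else 0) := by
        intro u
        by_cases hu : u = w
        · subst hu
          rw [if_pos rfl, if_neg (by omega : ¬ ((g w : ℕ) < r)),
            if_pos (by omega : (g w : ℕ) < r + 1)]
          ring
        · have hgu : (g u : ℕ) ≠ r := fun hc => hu (hval u hc)
          rw [if_neg hu]
          by_cases h3 : (g u : ℕ) < r
          · rw [if_pos h3, if_pos (by omega : (g u : ℕ) < r + 1)]; ring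
          · rw [if_neg h3, if_neg (by omega : ¬ ((g u : ℕ) < r + 1))]; ring
      rw [Finset.sum_congr rfl fun u _ => key u, Finset.sum_add_distrib,
        Finset.sum_ite_eq' Finset.univ w (fun u => (m u v : ℤ))]
      simp
    have hif : (if (g v : ℕ) < r + 1 then outdeg m v else 0)
        = (if (g v : ℕ) < r then outdeg m v else 0)
          + (if v = w then outdeg m w else 0) := by
      by_cases h1 : v = w
      · subst h1
        rw [if_pos rfl, if_neg (by omega : ¬ ((g w : ℕ) < r)),
          if_pos (by omega : (g w : ℕ) < r + 1)]
        ring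
      · have hgv : (g v : ℕ) ≠ r := fun hc => h1 (hval v hc)
        rw [if_neg h1]
        by_cases h3 : (g v : ℕ) < r
        · rw [if_pos h3, if_pos (by omega : (g v : ℕ) < r + 1)]; ring
        · rw [if_neg h3, if_neg (by omega : ¬ ((g v : ℕ) < r + 1))]; ring
    show X r v + (m w v : ℤ) - (if v = w then outdeg m w else 0) = X (r + 1) v
    simp only [hX, hsum, hif]
    ring
  have hgame : ∀ n, gameState m x s n = X (n % N) := by
    intro n
    induction n with
    | zero => simp [gameState, hX0, Nat.zero_mod]
    | succ n ih =>
      have hr : n % N < N := Nat.mod_lt _ hN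
      have h1 : gameState m x s (n + 1) = fire m (X (n % N)) (s n) := by
        rw [gameState, ih]
      rw [h1]
      have h2 : s n = g.symm ⟨n % N, hr⟩ := rfl
      rw [h2, hstep (n % N) hr]
      have hdiv : N * (n / N) + n % N = n := Nat.div_add_mod n N
      have hd : n + 1 = (n % N + 1) + N * (n / N) := by omega
      have h3 : (n + 1) % N = (n % N + 1) % N := by
        rw [hd, Nat.add_mul_mod_self_left]
      rw [h3]
      by_cases hlt : n % N + 1 < N
      · rw [Nat.mod_eq_of_lt hlt]
      · have heq : n % N + 1 = N := by omega
        rw [heq, Nat.mod_self, hX0, ← hXN]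
  refine fun hterm => hterm ⟨s, fun n => ?_⟩
  rw [hgame n]
  obtain ⟨r, hrdef⟩ : ∃ r, n % N = r := ⟨_, rfl⟩
  have hr : r < N := hrdef ▸ Nat.mod_lt _ hN
  have hsn : s n = g.symm ⟨r, hr⟩ := by
    simp only [hs]
    congr 1
    exact Fin.ext hrdef
  rw [hrdef, hsn]
  set w : V := g.symm ⟨r, hr⟩ with hw
  have hgw : (g w : ℕ) = r := by simp [hw]
  have hval : ∀ u : V, ((g u : ℕ) = r) → u = w := by
    intro u h
    exact g.injective (Fin.ext (by rw [hgw, h]))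
  have hcomb : x w + (∑ u, if (g u : ℕ) < r then (m u w : ℤ) else 0)
      = indeg m w := by
    rw [hx, indeg, ← Finset.sum_add_distrib]
    refine Finset.sum_congr rfl fun u _ => ?_
    by_cases h1 : u = w
    · subst h1
      rw [if_neg (lt_irrefl (g w)), if_neg (by omega : ¬ ((g w : ℕ) < r)),
        hloop w]
      simp
    · have h2 : (g u : ℕ) ≠ r := fun hc => h1 (hval u hc)
      have h4 : g w < g u ↔ r < (g u : ℕ) := by
        rw [Fin.lt_def, hgw]
      by_cases h3 : (g u : ℕ) < r
      · rw [if_neg (by rw [h4]; omega), if_pos h3]; ring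
      · rw [if_pos (by rw [h4]; omega), if_neg h3]; ring
  have hfinal : X r w = outdeg m w := by
    show x w + (∑ u, if (g u : ℕ) < r then (m u w : ℤ) else 0)
        - (if (g w : ℕ) < r then outdeg m w else 0) = outdeg m w
    rw [if_neg (by omega : ¬ ((g w : ℕ) < r)), hcomb, ← heul w]
    ring
  exact le_of_eq hfinal.symm

lemma minfas_eq_turnback (m T : V → V → ℕ) (hloop : Loopless m)
    (hT : ∀ u v, T u v ≤ m u v)
    (hTturn : AcyclicMul (fun u v => m u v - T u v + T v u))
    (hTmin : ∀ T' : V → V → ℕ, (∀ u v, T' u v ≤ m u v) →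
        AcyclicMul (fun u v => m u v - T' u v + T' v u) →
        ∑ u, ∑ v, T u v ≤ ∑ u, ∑ v, T' u v) :
    minfas m = ∑ u, ∑ v, T u v := by
  classical
  have hfasle : minfas m ≤ ∑ u, ∑ v, T u v := by
    apply Nat.sInf_le
    refine ⟨T, hT, ?_, rfl⟩
    intro v hc
    apply hTturn v
    refine Relation.TransGen.mono ?_ v v hc
    intro a b hab
    simp only at hab ⊢
    omega
  have hfasge : ∑ u, ∑ v, T u v ≤ minfas m := by
    have hne : {n : ℕ | ∃ F : V → V → ℕ, (∀ u v, F u v ≤ m u v) ∧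
        AcyclicMul (fun u v => m u v - F u v) ∧ ∑ u, ∑ v, F u v = n}.Nonempty := by
      refine ⟨∑ u, ∑ v, m u v, m, fun u v => le_refl _, ?_, rfl⟩
      intro v hc
      cases hc with
      | single h => simp at h
      | tail _ h => simp at h
    obtain ⟨F, hFle, hFac, hFsum⟩ :
        ∃ F : V → V → ℕ, (∀ u v, F u v ≤ m u v) ∧
          AcyclicMul (fun u v => m u v - F u v) ∧ ∑ u, ∑ v, F u v = minfas m :=
      Nat.sInf_mem hne
    obtain ⟨K', K'inj, K'mono⟩ := exists_key (fun u v => m u v - F u v) hFac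
    set T' : V → V → ℕ := fun u v => if K' v < K' u then m u v else 0 with hT'
    have hT'le : ∀ u v, T' u v ≤ m u v := by
      intro u v
      simp only [hT']
      split_ifs <;> omega
    have hT'ac : AcyclicMul (fun u v => m u v - T' u v + T' v u) := by
      intro v hc
      have hmono : ∀ a b : V, (0 < m a b - T' a b + T' b a) → K' a < K' b := by
        intro a b hab
        by_contra h1
        have h2 : T' b a = 0 := by simp only [hT']; rw [if_neg h1]
        by_cases hab' : a = b
        · subst hab'
          have h3 := hloop a
          have h4 : T' a a = 0 := h2
          omega
        · have hne2 : K' a ≠ K' b := fun hc2 => hab' (K'inj hc2)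
          have h3 : K' b < K' a := by omega
          have h4 : T' a b = m a b := by simp only [hT']; rw [if_pos h3]
          omega
      have htr : Transitive (fun a b : V => K' a < K' b) := fun a b c => Nat.lt_trans
      have hKc : K' v < K' v := by
        have := Relation.TransGen.mono hmono v v hc
        haveI hIT : IsTrans V (fun a b : V => K' a < K' b) := ⟨fun a b c h1 h2 => htr h1 h2⟩
        rwa [Relation.transGen_eq_self] at this
      exact lt_irrefl _ hKc
    have hT'F : ∀ u v, T' u v ≤ F u v := by
      intro u v
      simp only [hT']
      split_ifs with h
      · by_contra hc
        push_neg at hc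
        have := K'mono u v (by omega)
        omega
      · exact Nat.zero_le _
    calc ∑ u, ∑ v, T u v ≤ ∑ u, ∑ v, T' u v := hTmin T' hT'le hT'ac
      _ ≤ ∑ u, ∑ v, F u v :=
        Finset.sum_le_sum fun u _ => Finset.sum_le_sum fun v _ => hT'F u v
      _ = minfas m := hFsum
  exact le_antisymm hfasle hfasge

end Helpers
/-- Sharpness of the weak Riemann–Roch theorem: if `T` is a minimum cardinality turnback
arc set with indegree vector `x`, then `dist(x) = 0` and `dist(d⁻ - x) = 0`; consequently
`dist(x) - dist(d⁻ - x) = minfas(G) - deg(x)`, and for `y = d⁻ - x`,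
`dist(y) - dist(d⁻ - y) = |E(G)| - minfas(G) - deg(y)`. -/
theorem weak_riemann_roch_sharp
    {V : Type} [Fintype V] [DecidableEq V] [Nonempty V]
    (m : V → V → ℕ) (hloop : Loopless m) (hconn : StronglyConnected m)
    (heul : ∀ v, outdeg m v = indeg m v)
    (T : V → V → ℕ) (hT : ∀ u v, T u v ≤ m u v)
    (hTturn : AcyclicMul (fun u v => m u v - T u v + T v u))
    (hTmin : ∀ T' : V → V → ℕ, (∀ u v, T' u v ≤ m u v) →
        AcyclicMul (fun u v => m u v - T' u v + T' v u) →
        ∑ u, ∑ v, T u v ≤ ∑ u, ∑ v, T' u v) :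
    chipDist m (fun v => ∑ u, (T u v : ℤ)) = 0 ∧
    chipDist m (fun v => indeg m v - ∑ u, (T u v : ℤ)) = 0 ∧
    (chipDist m (fun v => ∑ u, (T u v : ℤ)) : ℤ)
        - (chipDist m (fun v => indeg m v - ∑ u, (T u v : ℤ)) : ℤ)
      = (minfas m : ℤ) - degSum (fun v => ∑ u, (T u v : ℤ)) ∧
    (chipDist m (fun v => indeg m v - ∑ u, (T u v : ℤ)) : ℤ)
        - (chipDist m (fun v => indeg m v - (indeg m v - ∑ u, (T u v : ℤ))) : ℤ)
      = (∑ u, ∑ v, (m u v : ℤ)) - (minfas m : ℤ)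
          - degSum (fun v => indeg m v - ∑ u, (T u v : ℤ)) := by
  classical
  obtain ⟨K, Kinj, Kmono⟩ := exists_key (fun u v => m u v - T u v + T v u) hTturn
  have Tstruct : ∀ u v, T u v = if K v < K u then m u v else 0 := by
    intro u v
    by_cases h : K v < K u
    · rw [if_pos h]
      have hk : m u v - T u v + T v u = 0 := by
        by_contra hc
        have := Kmono u v (Nat.pos_of_ne_zero hc)
        omega
      have := hT u v
      omega
    · rw [if_neg h]
      by_cases huv : u = v
      · have h1 := hT u v
        have h2 := hloop v
        rw [huv] at h1 ⊢
        omega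
      · have hne : K u ≠ K v := fun hc => huv (Kinj hc)
        have hKlt : K u < K v := by omega
        have hk : m v u - T v u + T u v = 0 := by
          by_contra hc
          have := Kmono v u (Nat.pos_of_ne_zero hc)
          omega
        omega
  -- build the equivalence g with K-order
  have hcard : (Finset.image K Finset.univ).card = Fintype.card V := by
    rw [Finset.card_image_of_injective _ Kinj, Finset.card_univ]
  set iso := (Finset.image K Finset.univ).orderIsoOfFin hcard with hiso
  set g0 : V → Fin (Fintype.card V) :=
    fun v => iso.symm ⟨K v, Finset.mem_image_of_mem K (Finset.mem_univ v)⟩ with hg0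
  have glt : ∀ u v, g0 u < g0 v ↔ K u < K v := by
    intro u v
    simp only [hg0]
    rw [OrderIso.lt_iff_lt, Subtype.mk_lt_mk]
  have g0inj : Function.Injective g0 := by
    intro a b h
    apply Kinj
    simp only [hg0] at h
    have := iso.symm.injective h
    exact Subtype.ext_iff.mp this
  set g : V ≃ Fin (Fintype.card V) :=
    Equiv.ofBijective g0 ((Fintype.bijective_iff_injective_and_card g0).mpr
      ⟨g0inj, by simp⟩) with hgdef
  have hgapp : ∀ v, g v = g0 v := fun _ => rfl
  have hN : 0 < Fintype.card V := Fintype.card_pos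
  -- x and y
  have hx : (fun v => ∑ u, (T u v : ℤ))
      = fun v => ∑ u, if g v < g u then (m u v : ℤ) else 0 := by
    funext v
    refine Finset.sum_congr rfl fun u _ => ?_
    rw [Tstruct u v]
    by_cases h : K v < K u
    · rw [if_pos h, if_pos (show g v < g u from (glt v u).mpr h)]
    · rw [if_neg h, if_neg (show ¬ (g v < g u) from fun hc => h ((glt v u).mp hc))]
      simp
  set g' : V ≃ Fin (Fintype.card V) := g.trans Fin.revPerm with hg'def
  have hy : (fun v => indeg m v - ∑ u, (T u v : ℤ))
      = fun v => ∑ u, if g' v < g' u then (m u v : ℤ) else 0 := by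
    funext v
    rw [indeg, ← Finset.sum_sub_distrib]
    refine Finset.sum_congr rfl fun u _ => ?_
    rw [Tstruct u v]
    have hcond : g' v < g' u ↔ g u < g v := by
      show Fin.revPerm (g v) < Fin.revPerm (g u) ↔ _
      simp only [Fin.revPerm_apply]
      exact Fin.rev_lt_rev
    have hcond2 : g u < g v ↔ K u < K v := by
      rw [hgapp, hgapp]; exact glt u v
    by_cases h : u = v
    · subst h
      rw [if_neg (lt_irrefl (K u)), if_neg (by rw [hcond]; exact lt_irrefl _)]
      simp [hloop u]
    · have hne : K u ≠ K v := fun hc => h (Kinj hc)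
      by_cases h1 : K u < K v
      · rw [if_neg (by omega : ¬ K v < K u),
          if_pos (by rw [hcond, hcond2]; exact h1)]
        simp
      · have h2 : K v < K u := by omega
        rw [if_pos h2, if_neg (by rw [hcond, hcond2]; omega)]
        simp
  have hnontx : ¬ Terminating m (fun v => ∑ u, (T u v : ℤ)) := by
    rw [hx]; exact nonterm m hloop heul hN g
  have hnonty : ¬ Terminating m (fun v => indeg m v - ∑ u, (T u v : ℤ)) := by
    rw [hy]; exact nonterm m hloop heul hN g'
  have hdist0 : ∀ z : V → ℤ, ¬ Terminating m z → chipDist m z = 0 := by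
    intro z hz
    rw [chipDist]
    refine Nat.sInf_eq_zero.mpr (Or.inl ?_)
    refine ⟨0, le_refl 0, by simp [degSum], ?_⟩
    rw [add_zero]
    exact hz
  have h1 := hdist0 _ hnontx
  have h2 := hdist0 _ hnonty
  -- minfas = |T|
  have hfaseq : (minfas m : ℤ) = ∑ u, ∑ v, (T u v : ℤ) := by
    rw [minfas_eq_turnback m T hloop hT hTturn hTmin]
    push_cast
    rfl
  have e2 : ∑ v, ∑ u, (T u v : ℤ) = ∑ u, ∑ v, (T u v : ℤ) := Finset.sum_comm
  have e1 : ∑ v, ∑ u, (m u v : ℤ) = ∑ u, ∑ v, (m u v : ℤ) := Finset.sum_comm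
  have hxx : (fun v => indeg m v - (indeg m v - ∑ u, (T u v : ℤ)))
      = (fun v => ∑ u, (T u v : ℤ)) := by
    funext v; ring
  refine ⟨h1, h2, ?_, ?_⟩
  · rw [h1, h2, hfaseq, degSum]
    rw [e2]
    simp
  · rw [hxx, h2, h1, hfaseq, degSum]
    simp only [indeg]
    rw [Finset.sum_sub_distrib, e1, e2]
    simp
end
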